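/- If A and B are short strongly surjective linear orders, then the lexicographic product A × B is strongly surjective. -/

import Mathlib

private lemma countable_Iio_of_lt_omega1 (o : Ordinal.{0}) (h : o < (Cardinal.aleph 1).ord) :
    (Set.Iio o).Countable := by
  rw [Cardinal.countable_iff_lt_aleph_one, Ordinal.mk_Iio_ordinal]
  exact Cardinal.lift_lt_aleph_one.mpr (Cardinal.lt_ord.mp h)



/-- In a linear order with no increasing ω₁-chain, every nonempty subset has a countable
cofinal subset. -/
private lemma exists_countable_cofinal {L : Type*} [LinearOrder L]
    (hL : ¬ ∃ f : {o : Ordinal.{0} // o < (Cardinal.aleph 1).ord} → L, StrictMono f)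
    (T : Set L) (t0 : L) (ht0 : t0 ∈ T) :
    ∃ D : Set L, D ⊆ T ∧ D.Countable ∧ ∀ t ∈ T, ∃ d ∈ D, t ≤ d := by
  classical
  by_contra hcon
  push_neg at hcon
  have key : ∀ D : Set L, D ⊆ T → D.Countable → ∃ t ∈ T, ∀ d ∈ D, d < t := by
    intro D hDT hDc
    exact hcon D hDT hDc
  let G : Ordinal.{0} → L := Ordinal.lt_wf.fix
    (fun o IH =>
      if hc : {l | ∃ o', ∃ h : o' < o, IH o' h = l} ⊆ T ∧
          {l | ∃ o', ∃ h : o' < o, IH o' h = l}.Countable then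
        (key _ hc.1 hc.2).choose
      else t0)
  have hGeq : ∀ o : Ordinal.{0}, G o =
      if hc : {l | ∃ o' , ∃ _ : o' < o, G o' = l} ⊆ T ∧
          {l | ∃ o', ∃ _ : o' < o, G o' = l}.Countable then
        (key _ hc.1 hc.2).choose
      else t0 := fun o => WellFounded.fix_eq _ _ o
  have hGT : ∀ o, G o ∈ T := by
    intro o
    rw [hGeq o]
    split
    · next hc => exact (key _ hc.1 hc.2).choose_spec.1
    · exact ht0
  have hmono : ∀ o : Ordinal.{0}, o < (Cardinal.aleph 1).ord → ∀ o' < o, G o' < G o := by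
    intro o ho o' ho'
    have hsub : {l | ∃ o'', ∃ _ : o'' < o, G o'' = l} ⊆ T := by
      rintro l ⟨o'', _, rfl⟩; exact hGT o''
    have hcnt : {l | ∃ o'', ∃ _ : o'' < o, G o'' = l}.Countable := by
      have : {l | ∃ o'', ∃ _ : o'' < o, G o'' = l} = G '' (Set.Iio o) := by
        ext l; simp [Set.mem_image, Set.mem_Iio, eq_comm]
      rw [this]
      exact (countable_Iio_of_lt_omega1 o ho).image G
    have := hGeq o
    rw [dif_pos ⟨hsub, hcnt⟩] at this
    rw [this]
    exact (key _ hsub hcnt).choose_spec.2 (G o') ⟨o', ho', rfl⟩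
  apply hL
  refine ⟨fun w => G w.val, fun w w' hw => ?_⟩
  exact hmono w'.val w'.2 w.val hw



private lemma exists_cofinal_seq {L : Type*} [LinearOrder L]
    (hL : ¬ ∃ f : {o : Ordinal.{0} // o < (Cardinal.aleph 1).ord} → L, StrictMono f)
    (T : Set L) (t0 : L) (ht0 : t0 ∈ T) (hnomax : ∀ t ∈ T, ∃ t' ∈ T, t < t') :
    ∃ f : ℕ → L, (∀ n, f n ∈ T) ∧ StrictMono f ∧ ∀ t ∈ T, ∃ n, t ≤ f n := by
  classical
  obtain ⟨D, hDT, hDc, hDcof⟩ := exists_countable_cofinal hL T t0 ht0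
  have hne : (insert t0 D).Nonempty := ⟨t0, Set.mem_insert _ _⟩
  obtain ⟨d, hd⟩ := Set.Countable.exists_eq_range (hDc.insert t0) hne
  have hdT : ∀ n, d n ∈ T := by
    intro n
    have : d n ∈ insert t0 D := hd ▸ Set.mem_range_self n
    rcases this with h | h
    · exact h ▸ ht0
    · exact hDT h
  have step : ∀ x ∈ T, ∀ y ∈ T, ∃ t ∈ T, x < t ∧ y < t := by
    intro x hx y hy
    have hm : max x y ∈ T := by
      rcases le_total x y with h | h
      · rwa [max_eq_right h]
      · rwa [max_eq_left h]
    obtain ⟨t, ht, hlt⟩ := hnomax _ hm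
    exact ⟨t, ht, lt_of_le_of_lt (le_max_left _ _) hlt, lt_of_le_of_lt (le_max_right _ _) hlt⟩
  let F : ℕ → {x // x ∈ T} := fun n => Nat.rec ⟨t0, ht0⟩
    (fun n p => ⟨(step p.1 p.2 (d n) (hdT n)).choose, (step p.1 p.2 (d n) (hdT n)).choose_spec.1⟩) n
  have hFs : ∀ n, (F n).1 < (F (n+1)).1 ∧ d n < (F (n+1)).1 := by
    intro n
    exact (step (F n).1 (F n).2 (d n) (hdT n)).choose_spec.2
  refine ⟨fun n => (F n).1, fun n => (F n).2, strictMono_nat_of_lt_succ (fun n => (hFs n).1), ?_⟩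
  intro t ht
  obtain ⟨e, he, hte⟩ := hDcof t ht
  have : e ∈ insert t0 D := Set.mem_insert_of_mem _ he
  rw [hd] at this
  obtain ⟨n, rfl⟩ := this
  exact ⟨n + 1, le_trans hte (le_of_lt (hFs n).2)⟩



/-- Key combinatorial lemma: pieces along an upward ray. -/
private lemma ray {A : Type*} {B : Type*} [LinearOrder A] [LinearOrder B]
    (hA1 : ¬ ∃ f : {o : Ordinal.{0} // o < (Cardinal.aleph 1).ord} → A, StrictMono f)
    (hB1 : ¬ ∃ f : {o : Ordinal.{0} // o < (Cardinal.aleph 1).ord} → B, StrictMono f)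
    (D : Set A) (x0 : A) (hx0 : x0 ∈ D) (hx0min : ∀ x ∈ D, x0 ≤ x)
    (U : Set B) (u0 : B) (hu0 : u0 ∈ U) (hu0min : ∀ u ∈ U, u0 ≤ u) :
    ∃ p : A → Set B,
      (∀ x ∈ D, (p x).Nonempty) ∧
      (∀ x ∈ D, p x ⊆ U) ∧
      (∀ x ∈ D, ∀ x' ∈ D, x < x' → ∀ b ∈ p x, ∀ b' ∈ p x', b ≤ b') ∧
      (∀ u ∈ U, ∃ x ∈ D, u ∈ p x) := by
  classical
  by_cases hUmax : ∃ u1 ∈ U, ∀ v ∈ U, v ≤ u1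
  · -- U has a maximum
    obtain ⟨u1, hu1U, hu1max⟩ := hUmax
    refine ⟨fun x => if x = x0 then U else {u1}, ?_, ?_, ?_, ?_⟩
    · intro x _; dsimp only; split
      · exact ⟨u0, hu0⟩
      · exact ⟨u1, rfl⟩
    · intro x _ b hb
      dsimp only at hb
      by_cases h : x = x0
      · rw [if_pos h] at hb; exact hb
      · rw [if_neg h] at hb; rw [hb]; exact hu1U
    · intro x hx x' hx' hlt b hb b' hb'
      dsimp only at hb hb'
      have hx'ne : x' ≠ x0 := fun h => absurd (lt_of_le_of_lt (hx0min x hx) hlt)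
        (by rw [h]; exact lt_irrefl x0)
      rw [if_neg hx'ne] at hb'
      rw [hb']
      by_cases h : x = x0
      · rw [if_pos h] at hb; exact hu1max b hb
      · rw [if_neg h] at hb; rw [hb]
    · intro u hu; exact ⟨x0, hx0, by dsimp only; rw [if_pos rfl]; exact hu⟩
  · -- U has no maximum
    push_neg at hUmax
    have hUnomax : ∀ u ∈ U, ∃ u' ∈ U, u < u' := hUmax
    obtain ⟨f, hfU, hfmono, hfcof⟩ := exists_cofinal_seq hB1 U u0 hu0 hUnomax
    by_cases hD' : ∃ x ∈ D, x0 < x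
    · by_cases hDmax : ∃ x1 ∈ D, ∀ x ∈ D, x ≤ x1
      · -- D has a maximum x1 > x0
        obtain ⟨x1, hx1D, hx1max⟩ := hDmax
        have hx01 : x0 < x1 := by
          obtain ⟨x, hx, hlt⟩ := hD'
          exact lt_of_lt_of_le hlt (hx1max x hx)
        refine ⟨fun x => if x = x0 then U ∩ Set.Iic (f 0) else if x = x1 then U ∩ Set.Ici (f 0)
          else {f 0}, ?_, ?_, ?_, ?_⟩
        · intro x _
          dsimp only; split
          · exact ⟨u0, hu0, hu0min _ (hfU 0)⟩
          · split
            · exact ⟨f 0, hfU 0, le_refl _⟩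
            · exact ⟨f 0, rfl⟩
        · intro x _ b hb
          dsimp only at hb
          split at hb
          · exact hb.1
          · split at hb
            · exact hb.1
            · rw [hb]; exact hfU 0
        · intro x hx x' hx' hlt b hb b' hb'
          dsimp only at hb hb'
          have hx'ne : x' ≠ x0 := fun h =>
            absurd (lt_of_le_of_lt (hx0min x hx) hlt) (by rw [h]; exact lt_irrefl x0)
          have hb'ge : f 0 ≤ b' := by
            rw [if_neg hx'ne] at hb'
            split at hb'
            · exact hb'.2
            · rw [hb']
          by_cases h : x = x0
          · rw [if_pos h] at hb
            exact le_trans hb.2 hb'ge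
          · have hxne1 : x ≠ x1 := fun h1 =>
              absurd (lt_of_lt_of_le hlt (hx1max x' hx')) (by rw [h1]; exact lt_irrefl x1)
            rw [if_neg h, if_neg hxne1] at hb
            rw [hb]; exact hb'ge
        · intro u hu
          rcases le_total u (f 0) with h | h
          · exact ⟨x0, hx0, by dsimp only; rw [if_pos rfl]; exact ⟨hu, h⟩⟩
          · refine ⟨x1, hx1D, ?_⟩
            dsimp only
            rw [if_neg (ne_of_gt hx01), if_pos rfl]
            exact ⟨hu, h⟩
      · -- D has no maximum
        have hD'set : ∀ x ∈ {x ∈ D | x0 < x}, ∃ x' ∈ {x ∈ D | x0 < x}, x < x' := by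
          push_neg at hDmax
          rintro x ⟨hxD, hx0x⟩
          obtain ⟨x', hx'D, hlt⟩ := hDmax x hxD
          exact ⟨x', ⟨hx'D, lt_trans hx0x hlt⟩, hlt⟩
        obtain ⟨xw, hxwD⟩ := hD'
        obtain ⟨g, hgD, hgmono, hgcof⟩ := exists_cofinal_seq hA1 {x ∈ D | x0 < x} xw
          ⟨hxwD.1, hxwD.2⟩ hD'set
        set n : A → ℕ := fun x => if hx : ∃ k, x ≤ g k then Nat.find hx else 0 with hn
        have hnle : ∀ x ∈ D, x ≠ x0 → x ≤ g (n x) ∧ ∀ k, x ≤ g k → n x ≤ k := by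
          intro x hxD hxne
          have hx0x : x0 < x := lt_of_le_of_ne (hx0min x hxD) (Ne.symm hxne)
          obtain ⟨k, hk⟩ := hgcof x ⟨hxD, hx0x⟩
          have hex : ∃ k, x ≤ g k := ⟨k, hk⟩
          rw [hn]
          simp only [dif_pos hex]
          exact ⟨Nat.find_spec hex, fun k hk' => Nat.find_min' hex hk'⟩
        have hng : ∀ m, n (g m) = m := by
          intro m
          have hgm : g m ∈ D := (hgD m).1
          have hgmne : g m ≠ x0 := ne_of_gt (hgD m).2
          obtain ⟨h1, h2⟩ := hnle (g m) hgm hgmne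
          have hle : n (g m) ≤ m := h2 m (le_refl _)
          have : g m ≤ g (n (g m)) := h1
          by_contra hne2
          have hlt : n (g m) < m := lt_of_le_of_ne hle hne2
          exact absurd this (not_le_of_gt (hgmono hlt))
        refine ⟨fun x => if x = x0 then U ∩ Set.Iic (f 0)
          else if x = g (n x) then U ∩ Set.Icc (f (n x)) (f (n x + 1)) else {f (n x)},
          ?_, ?_, ?_, ?_⟩
        · intro x _
          dsimp only; split
          · exact ⟨u0, hu0, hu0min _ (hfU 0)⟩
          · split
            · exact ⟨f (n x), hfU _, le_refl _, le_of_lt (hfmono (Nat.lt_succ_self _))⟩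
            · exact ⟨f (n x), rfl⟩
        · intro x _ b hb
          dsimp only at hb
          split at hb
          · exact hb.1
          · split at hb
            · exact hb.1
            · rw [hb]; exact hfU _
        · intro x hx x' hx' hlt b hb b' hb'
          dsimp only at hb hb'
          have hx'ne : x' ≠ x0 := fun h =>
            absurd (lt_of_le_of_lt (hx0min x hx) hlt) (by rw [h]; exact lt_irrefl x0)
          -- b' is ≥ f (n x')
          have hb'ge : f (n x') ≤ b' := by
            rw [if_neg hx'ne] at hb'
            split at hb'
            · exact hb'.2.1
            · rw [hb']
          by_cases h : x = x0
          · rw [if_pos h] at hb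
            exact le_trans hb.2 (le_trans (hfmono.monotone (Nat.zero_le _)) hb'ge)
          · -- both x, x' distinct from x0
            have hnlex : n x ≤ n x' := by
              obtain ⟨h1, _⟩ := hnle x' hx' hx'ne
              obtain ⟨_, h2⟩ := hnle x hx h
              exact h2 (n x') (le_trans (le_of_lt hlt) h1)
            rcases lt_or_eq_of_le hnlex with hlt2 | heq
            · -- n x < n x' : p x ⊆ Iic (f (n x + 1)) ≤ f (n x')
              have hble : b ≤ f (n x + 1) := by
                rw [if_neg h] at hb
                split at hb
                · exact hb.2.2
                · rw [hb]; exact le_of_lt (hfmono (Nat.lt_succ_self _))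
              exact le_trans hble (le_trans (hfmono.monotone hlt2) hb'ge)
            · -- n x = n x' : then x ≠ g (n x), so p x = {f (n x)}
              have hxne : x ≠ g (n x) := by
                intro hxe
                obtain ⟨h1, _⟩ := hnle x' hx' hx'ne
                have : x < g (n x') := lt_of_lt_of_le hlt h1
                rw [heq] at hxe
                rw [hxe] at this
                exact lt_irrefl _ this
              rw [if_neg h, if_neg hxne] at hb
              rw [hb, heq]
              exact hb'ge
        · intro u hu
          rcases le_total u (f 0) with h | h
          · exact ⟨x0, hx0, by dsimp only; rw [if_pos rfl]; exact ⟨hu, h⟩⟩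
          · obtain ⟨k, hk⟩ := hfcof u hu
            have hex : ∃ k, u ≤ f (k + 1) := by
              cases k with
              | zero => exact ⟨0, le_trans hk (le_of_lt (hfmono (Nat.lt_succ_self 0)))⟩
              | succ m => exact ⟨m, hk⟩
            set m := Nat.find hex with hm
            have hum : u ≤ f (m + 1) := Nat.find_spec hex
            have hfm : f m ≤ u := by
              rcases Nat.eq_zero_or_pos m with h0 | hpos
              · rw [h0]; exact h
              · have hlt1 : m - 1 < m := Nat.sub_lt hpos one_pos
                have h2 := Nat.find_min hex hlt1
                have h3 : m - 1 + 1 = m := Nat.succ_pred_eq_of_pos hpos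
                rw [h3] at h2
                exact le_of_not_ge h2
            refine ⟨g m, (hgD m).1, ?_⟩
            have hne : g m ≠ x0 := ne_of_gt (hgD m).2
            dsimp only
            rw [if_neg hne, hng m, if_pos rfl]
            exact ⟨hu, hfm, hum⟩
    · -- D = {x0}
      refine ⟨fun _ => U, fun x _ => ⟨u0, hu0⟩, fun x _ => le_refl _, ?_, fun u hu => ⟨x0, hx0, hu⟩⟩
      intro x hx x' hx' hlt b hb b' hb'
      push_neg at hD'
      have h1 : x = x0 := le_antisymm (hD' x hx) (hx0min x hx)
      have h2 : x' = x0 := le_antisymm (hD' x' hx') (hx0min x' hx')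
      rw [h1, h2] at hlt
      exact absurd hlt (lt_irrefl x0)



private lemma ray_dual {A : Type*} {B : Type*} [LinearOrder A] [LinearOrder B]
    (hA2 : ¬ ∃ f : {o : Ordinal.{0} // o < (Cardinal.aleph 1).ord} → A, StrictAnti f)
    (hB2 : ¬ ∃ f : {o : Ordinal.{0} // o < (Cardinal.aleph 1).ord} → B, StrictAnti f)
    (D : Set A) (x0 : A) (hx0 : x0 ∈ D) (hx0max : ∀ x ∈ D, x ≤ x0)
    (U : Set B) (u0 : B) (hu0 : u0 ∈ U) (hu0max : ∀ u ∈ U, u ≤ u0) :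
    ∃ p : A → Set B,
      (∀ x ∈ D, (p x).Nonempty) ∧
      (∀ x ∈ D, p x ⊆ U) ∧
      (∀ x ∈ D, ∀ x' ∈ D, x < x' → ∀ b ∈ p x, ∀ b' ∈ p x', b ≤ b') ∧
      (∀ u ∈ U, ∃ x ∈ D, u ∈ p x) := by
  have hA1 : ¬ ∃ f : {o : Ordinal.{0} // o < (Cardinal.aleph 1).ord} → Aᵒᵈ, StrictMono f := by
    rintro ⟨f, hf⟩
    exact hA2 ⟨fun w => OrderDual.ofDual (f w), fun a b hab => hf hab⟩
  have hB1 : ¬ ∃ f : {o : Ordinal.{0} // o < (Cardinal.aleph 1).ord} → Bᵒᵈ, StrictMono f := by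
    rintro ⟨f, hf⟩
    exact hB2 ⟨fun w => OrderDual.ofDual (f w), fun a b hab => hf hab⟩
  obtain ⟨p, h1, h2, h3, h4⟩ := ray (A := Aᵒᵈ) (B := Bᵒᵈ) hA1 hB1
    (OrderDual.ofDual ⁻¹' D) (OrderDual.toDual x0) hx0
    (fun x hx => OrderDual.toDual_le_toDual.mpr (hx0max _ hx))
    (OrderDual.ofDual ⁻¹' U) (OrderDual.toDual u0) hu0
    (fun u hu => OrderDual.toDual_le_toDual.mpr (hu0max _ hu))
  refine ⟨fun a => p (OrderDual.toDual a), h1, h2, ?_, h4⟩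
  intro x hx x' hx' hlt b hb b' hb'
  exact h3 (OrderDual.toDual x') hx' (OrderDual.toDual x) hx
    (OrderDual.toDual_lt_toDual.mpr hlt) b' hb' b hb


/-- A linear order is short if neither `ω₁` nor `ω₁*` embeds into it. -/
def IsShort (L : Type*) [LinearOrder L] : Prop :=
  (¬ ∃ f : {o : Ordinal.{0} // o < (Cardinal.aleph 1).ord} → L, StrictMono f) ∧
  (¬ ∃ f : {o : Ordinal.{0} // o < (Cardinal.aleph 1).ord} → L, StrictAnti f)

/-- A linear order is strongly surjective if it surjects monotonically onto each of its
nonempty suborders. -/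
def StronglySurjective (L : Type*) [LinearOrder L] : Prop :=
  ∀ S : Set L, S.Nonempty → ∃ f : L → S, Monotone f ∧ Function.Surjective f

/-- The lexicographic product of two short strongly surjective linear orders is
strongly surjective. -/





theorem stronglySurjective_lex_prod {A B : Type*} [LinearOrder A] [LinearOrder B]
    (hA : IsShort A) (hB : IsShort B)
    (hAs : StronglySurjective A) (hBs : StronglySurjective B) :
    StronglySurjective (A ×ₗ B) := by
  classical
  intro S hS
  obtain ⟨s0, hs0⟩ := hS
  set A' : Set A := {a | ∃ b, toLex (a, b) ∈ S} with hA'def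
  have hA'ne : A'.Nonempty := ⟨(ofLex s0).1, (ofLex s0).2, hs0⟩
  obtain ⟨g, hgmono, hgsurj⟩ := hAs A' hA'ne
  set T : ↥A' → Set B := fun c => {b | toLex ((c : A), b) ∈ S} with hTdef
  have htstar : ∀ c : ↥A', ∃ b, b ∈ T c := fun c => c.2
  choose tst htst using htstar
  choose x0 hx0 using hgsurj
  -- upward pieces
  have hray : ∀ c : ↥A', ∃ p : A → Set B,
      (∀ x ∈ {x | g x = c ∧ x0 c ≤ x}, (p x).Nonempty) ∧
      (∀ x ∈ {x | g x = c ∧ x0 c ≤ x}, p x ⊆ T c ∩ Set.Ici (tst c)) ∧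
      (∀ x ∈ {x | g x = c ∧ x0 c ≤ x}, ∀ x' ∈ {x | g x = c ∧ x0 c ≤ x}, x < x' →
        ∀ b ∈ p x, ∀ b' ∈ p x', b ≤ b') ∧
      (∀ u ∈ T c ∩ Set.Ici (tst c), ∃ x ∈ {x | g x = c ∧ x0 c ≤ x}, u ∈ p x) := by
    intro c
    exact ray hA.1 hB.1 {x | g x = c ∧ x0 c ≤ x} (x0 c) ⟨hx0 c, le_refl _⟩ (fun x hx => hx.2)
      (T c ∩ Set.Ici (tst c)) (tst c) ⟨htst c, le_refl _⟩ (fun u hu => hu.2)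
  choose pUp hUp1 hUp2 hUp3 hUp4 using hray
  -- downward pieces
  have hray2 : ∀ c : ↥A', ∃ p : A → Set B,
      (∀ x ∈ {x | g x = c ∧ x ≤ x0 c}, (p x).Nonempty) ∧
      (∀ x ∈ {x | g x = c ∧ x ≤ x0 c}, p x ⊆ T c ∩ Set.Iic (tst c)) ∧
      (∀ x ∈ {x | g x = c ∧ x ≤ x0 c}, ∀ x' ∈ {x | g x = c ∧ x ≤ x0 c}, x < x' →
        ∀ b ∈ p x, ∀ b' ∈ p x', b ≤ b') ∧
      (∀ u ∈ T c ∩ Set.Iic (tst c), ∃ x ∈ {x | g x = c ∧ x ≤ x0 c}, u ∈ p x) := by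
    intro c
    exact ray_dual hA.2 hB.2 {x | g x = c ∧ x ≤ x0 c} (x0 c) ⟨hx0 c, le_refl _⟩ (fun x hx => hx.2)
      (T c ∩ Set.Iic (tst c)) (tst c) ⟨htst c, le_refl _⟩ (fun u hu => hu.2)
  choose pDn hDn1 hDn2 hDn3 hDn4 using hray2
  set piece : A → Set B := fun a =>
    (if a ≤ x0 (g a) then pDn (g a) a else ∅) ∪ (if x0 (g a) ≤ a then pUp (g a) a else ∅)
    with hpiecedef
  have hpieceNe : ∀ a, (piece a).Nonempty := by
    intro a
    rcases le_total a (x0 (g a)) with h | h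
    · obtain ⟨b, hb⟩ := hDn1 (g a) a ⟨rfl, h⟩
      exact ⟨b, Or.inl (by rw [if_pos h]; exact hb)⟩
    · obtain ⟨b, hb⟩ := hUp1 (g a) a ⟨rfl, h⟩
      exact ⟨b, Or.inr (by rw [if_pos h]; exact hb)⟩
  have hpieceSub : ∀ a, piece a ⊆ T (g a) := by
    intro a b hb
    rcases hb with hb | hb
    · split at hb
      · exact (hDn2 (g a) a ⟨rfl, ‹_›⟩ hb).1
      · exact absurd hb (Set.notMem_empty b)
    · split at hb
      · exact (hUp2 (g a) a ⟨rfl, ‹_›⟩ hb).1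
      · exact absurd hb (Set.notMem_empty b)
  -- monotonicity across a fiber
  have hP3 : ∀ a a' : A, a < a' → g a = g a' → ∀ b ∈ piece a, ∀ b' ∈ piece a', b ≤ b' := by
    intro a a' hlt he b hb b' hb'
    rw [hpiecedef] at hb hb'
    dsimp only at hb hb'
    rw [← he] at hb'
    rcases hb with hb | hb
    · split at hb
      case isFalse => exact absurd hb (Set.notMem_empty b)
      case isTrue ha =>
        rcases hb' with hb' | hb'
        · split at hb'
          case isFalse => exact absurd hb' (Set.notMem_empty b')
          case isTrue ha' =>
            exact hDn3 (g a) a ⟨rfl, ha⟩ a' ⟨he.symm, ha'⟩ hlt b hb b' hb'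
        · split at hb'
          case isFalse => exact absurd hb' (Set.notMem_empty b')
          case isTrue ha' =>
            exact le_trans (hDn2 (g a) a ⟨rfl, ha⟩ hb).2 (hUp2 (g a) a' ⟨he.symm, ha'⟩ hb').2
    · split at hb
      case isFalse => exact absurd hb (Set.notMem_empty b)
      case isTrue ha =>
        rcases hb' with hb' | hb'
        · split at hb'
          case isFalse => exact absurd hb' (Set.notMem_empty b')
          case isTrue ha' =>
            -- x0 ≤ a < a' ≤ x0 : contradiction
            exact absurd (lt_of_lt_of_le (lt_of_le_of_lt ha hlt) ha') (lt_irrefl _)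
        · split at hb'
          case isFalse => exact absurd hb' (Set.notMem_empty b')
          case isTrue ha' =>
            exact hUp3 (g a) a ⟨rfl, ha⟩ a' ⟨he.symm, ha'⟩ hlt b hb b' hb'
  -- coverage
  have hP4 : ∀ c : ↥A', ∀ b ∈ T c, ∃ a, g a = c ∧ b ∈ piece a := by
    intro c b hbT
    rcases le_total b (tst c) with h | h
    · obtain ⟨x, ⟨hgx, hxle⟩, hbx⟩ := hDn4 c b ⟨hbT, h⟩
      refine ⟨x, hgx, ?_⟩
      rw [hpiecedef]
      dsimp only
      rw [hgx]
      exact Or.inl (by rw [if_pos hxle]; exact hbx)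
    · obtain ⟨x, ⟨hgx, hxle⟩, hbx⟩ := hUp4 c b ⟨hbT, h⟩
      refine ⟨x, hgx, ?_⟩
      rw [hpiecedef]
      dsimp only
      rw [hgx]
      exact Or.inr (by rw [if_pos hxle]; exact hbx)
  -- the surjections onto the pieces
  have hBs' : ∀ a : A, ∃ h : B → ↥(piece a), Monotone h ∧ Function.Surjective h :=
    fun a => hBs (piece a) (hpieceNe a)
  choose h hmonoh hsurjh using hBs'
  refine ⟨fun x => ⟨toLex ((g (ofLex x).1 : A), (h (ofLex x).1 (ofLex x).2 : B)), ?_⟩, ?_, ?_⟩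
  · exact hpieceSub _ (h (ofLex x).1 (ofLex x).2).2
  · -- monotone
    intro x y hxy
    rcases Prod.Lex.le_iff.mp hxy with h1 | ⟨heq, hle⟩
    · rcases lt_or_eq_of_le (hgmono h1.le) with h2 | h2
      · exact Subtype.mk_le_mk.mpr (Prod.Lex.le_iff.mpr (Or.inl (Subtype.coe_lt_coe.mpr h2)))
      · refine Subtype.mk_le_mk.mpr (Prod.Lex.le_iff.mpr (Or.inr
          ⟨congrArg Subtype.val h2, ?_⟩))
        exact hP3 _ _ h1 h2 _ (h (ofLex x).1 (ofLex x).2).2 _ (h (ofLex y).1 (ofLex y).2).2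
    · refine Subtype.mk_le_mk.mpr (Prod.Lex.le_iff.mpr (Or.inr ⟨?_, ?_⟩))
      · exact congrArg (fun z => (g z : A)) heq
      · revert hle
        rw [show (ofLex y).1 = (ofLex x).1 from heq.symm]
        intro hle
        exact Subtype.coe_le_coe.mpr (hmonoh _ hle)
  · -- surjective
    rintro ⟨s, hsS⟩
    have hmem : (ofLex s).1 ∈ A' := ⟨(ofLex s).2, hsS⟩
    have hbT : (ofLex s).2 ∈ T ⟨(ofLex s).1, hmem⟩ := hsS
    obtain ⟨a, hga, hbp⟩ := hP4 ⟨(ofLex s).1, hmem⟩ (ofLex s).2 hbT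
    obtain ⟨b, hb⟩ := hsurjh a ⟨(ofLex s).2, hbp⟩
    refine ⟨toLex (a, b), Subtype.ext ?_⟩
    show toLex ((g (ofLex (toLex (a, b))).1 : A), (h (ofLex (toLex (a, b))).1
      (ofLex (toLex (a, b))).2 : B)) = s
    have h1 : (g (ofLex (toLex (a, b))).1 : A) = (ofLex s).1 := by rw [show (ofLex (toLex (a, b))).1 = a from rfl, hga]
    have h2 : (h (ofLex (toLex (a, b))).1 (ofLex (toLex (a, b))).2 : B) = (ofLex s).2 := by
      rw [show (ofLex (toLex (a, b))).1 = a from rfl, show (ofLex (toLex (a, b))).2 = b from rfl]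
      exact congrArg Subtype.val hb
    rw [h1, h2]
    rfl
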